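/- If C ⊆ F_q^{m×n} is a rank-metric code with minimum rank distance d (i.e., rank(X−Y) ≥ d for all distinct X, Y ∈ C), then log_q |C| ≤ m(n − d + 1). -/

import Mathlib

open scoped Classical

lemma rank_le_of_cols {F : Type} [Field F] {m n r : ℕ}
    (A : Matrix (Fin m) (Fin n) F) (e : Fin r → Fin n) (he : Function.Injective e)
    (hA : ∀ i j, A i j ≠ 0 → ∃ k, e k = j) : A.rank ≤ r := by
  have hfac : A = (A.submatrix id e) * Matrix.of (fun k j => if e k = j then (1:F) else 0) := by
    ext i j
    rw [Matrix.mul_apply]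
    by_cases h : ∃ k, e k = j
    · obtain ⟨k0, hk0⟩ := h
      rw [Finset.sum_eq_single k0]
      · simp [Matrix.submatrix_apply, hk0]
      · intro k _ hk
        have : e k ≠ j := fun hej => hk (he (hej.trans hk0.symm))
        simp [Matrix.submatrix_apply, this]
      · simp
    · have hz : A i j = 0 := by
        by_contra hne
        exact h (hA i j hne)
      rw [hz]
      symm
      apply Finset.sum_eq_zero
      intro k _
      have : e k ≠ j := fun hej => h ⟨k, hej⟩
      simp [this]
  calc A.rank = ((A.submatrix id e) * (_ : Matrix (Fin r) (Fin n) F)).rank := by rw [← hfac]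
    _ ≤ (A.submatrix id e).rank := Matrix.rank_mul_le_left _ _
    _ ≤ Fintype.card (Fin r) := Matrix.rank_le_card_width _
    _ = r := Fintype.card_fin r

/-- Singleton bound for rank-metric codes: if `C ⊆ F_q^{m×n}` has minimum rank
distance `d`, then `log_q |C| ≤ m(n − d + 1)`. -/
theorem singleton_bound (q m n d : ℕ) (F : Type) [Field F] [Fintype F]
    (hq : Fintype.card F = q) (hnm : n ≤ m) (hd : 1 ≤ d) (hdn : d ≤ n)
    (C : Set (Matrix (Fin m) (Fin n) F)) (hC : C.Nonempty)
    (hdist : ∀ X ∈ C, ∀ Y ∈ C, X ≠ Y → d ≤ (X - Y).rank) :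
    Real.logb q (Nat.card C) ≤ (m * (n - d + 1) : ℕ) := by
  set k := n - d + 1 with hk
  have hkn : k ≤ n := by omega
  -- projection to the first k columns
  let proj : Matrix (Fin m) (Fin n) F → Matrix (Fin m) (Fin k) F :=
    fun X => Matrix.of (fun i j => X i ⟨(j : ℕ), lt_of_lt_of_le j.isLt hkn⟩)
  -- proj is injective on C
  have hinj : Function.Injective (fun x : C => proj (x : Matrix (Fin m) (Fin n) F)) := by
    rintro ⟨X, hX⟩ ⟨Y, hY⟩ hXY
    simp only at hXY
    ext1
    by_contra hne
    have hdle := hdist X hX Y hY hne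
    -- X - Y vanishes on the first k columns
    have hcols : ∀ i (j : Fin n), (X - Y) i j ≠ 0 → ∃ l : Fin (d - 1),
        (⟨k + (l : ℕ), by omega⟩ : Fin n) = j := by
      intro i j hne0
      by_cases hj : (j : ℕ) < k
      · exfalso
        apply hne0
        have h2 := congrFun (congrFun hXY i) ⟨(j : ℕ), hj⟩
        simp only [proj, Matrix.of_apply, Fin.eta] at h2
        simp [Matrix.sub_apply, h2]
      · refine ⟨⟨(j : ℕ) - k, by omega⟩, ?_⟩
        ext
        simp
        omega
    have hrank : (X - Y).rank ≤ d - 1 := by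
      apply rank_le_of_cols (X - Y) (fun l : Fin (d-1) => (⟨k + (l : ℕ), by omega⟩ : Fin n))
      · intro a b hab
        have : k + (a : ℕ) = k + (b : ℕ) := congrArg Fin.val hab
        exact Fin.ext (by omega)
      · exact hcols
    omega
  -- counting
  have hcard : Nat.card C ≤ q ^ (m * k) := by
    have h1 : Nat.card C ≤ Nat.card (Matrix (Fin m) (Fin k) F) :=
      Nat.card_le_card_of_injective _ hinj
    have h2 : Nat.card (Matrix (Fin m) (Fin k) F) = q ^ (m * k) := by
      rw [Nat.card_eq_fintype_card]
      show Fintype.card (Fin m → Fin k → F) = q ^ (m * k)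
      simp [Fintype.card_fun, hq, ← pow_mul, mul_comm]
    omega
  have hq2 : 2 ≤ q := hq ▸ Fintype.one_lt_card
  have hCpos : 0 < Nat.card C := Nat.card_pos_iff.mpr ⟨hC.to_subtype, Set.toFinite C⟩
  have hb : (1:ℝ) < (q:ℝ) := by exact_mod_cast hq2
  calc Real.logb q (Nat.card C) ≤ Real.logb q ((q:ℝ) ^ (m * k)) := by
        apply Real.logb_le_logb_of_le hb (by exact_mod_cast hCpos)
        exact_mod_cast hcard
    _ = (m * k : ℕ) := by
        rw [Real.logb_pow, Real.logb_self_eq_one hb, mul_one]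
    _ = (m * (n - d + 1) : ℕ) := by rw [hk]
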